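/- Let u(t, xi, eta) = c*eta + v(t, xi) where v solves the backward heat equation v_t + (C/2) v_{xi xi} = 0 and c is a nonzero constant. Then u solves the fully nonlinear PDE u_t + (C/2) * (u_{xi xi} u_eta^2 - 2 u_{xi eta} u_xi u_eta + u_{eta eta} u_xi^2) / u_eta^2 = 0. -/
import Mathlib


/-- If `v` solves the backward heat equation `v_t + (C/2) v_{ξξ} = 0` and
`c ≠ 0`, then `u(t,ξ,η) = c η + v(t,ξ)` solves the fully nonlinear PDE
`u_t + (C/2)(u_{ξξ} u_η² - 2 u_{ξη} u_ξ u_η + u_{ηη} u_ξ²)/u_η² = 0`. -/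
theorem linear_plus_heat_solves_nonlinear_pde
    (v : ℝ → ℝ → ℝ) (c C : ℝ) (hc : c ≠ 0)
    (hv : ∀ t ξ : ℝ,
      deriv (fun s => v s ξ) t + C / 2 * deriv (deriv fun x => v t x) ξ = 0)
    (t ξ η : ℝ) :
    let u : ℝ → ℝ → ℝ → ℝ := fun t ξ η => c * η + v t ξ
    deriv (fun s => u s ξ η) t
      + C / 2 *
        (deriv (deriv fun x => u t x η) ξ * (deriv (fun e => u t ξ e) η) ^ 2
          - 2 * deriv (fun e => deriv (fun x => u t x e) ξ) η
              * deriv (fun x => u t x η) ξ * deriv (fun e => u t ξ e) η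
          + deriv (deriv fun e => u t ξ e) η * (deriv (fun x => u t x η) ξ) ^ 2)
        / (deriv (fun e => u t ξ e) η) ^ 2 = 0 := by
  intro u
  have h1 : deriv (fun s => u s ξ η) t = deriv (fun s => v s ξ) t := by
    simp only [u, deriv_const_add]
  have h2 : (deriv fun x => u t x η) = deriv fun x => v t x := by
    funext x
    simp only [u, deriv_const_add]
  have hη : deriv (fun e => u t ξ e) = fun _ => c := by
    funext e
    simp only [u]
    rw [deriv_add_const]
    simpa using ((hasDerivAt_id e).const_mul c).deriv
  have h3 : deriv (fun e => u t ξ e) η = c := by rw [hη]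
  have h4 : deriv (deriv fun e => u t ξ e) η = 0 := by
    rw [hη]; simp
  have h5 : deriv (fun e => deriv (fun x => u t x e) ξ) η = 0 := by
    have : (fun e => deriv (fun x => u t x e) ξ) = fun _ => deriv (fun x => v t x) ξ := by
      funext e
      simp only [u, deriv_const_add]
    rw [this]; simp
  rw [h1, h2, h3, h4, h5]
  have := hv t ξ
  field_simp
  linear_combination (2 * c ^ 2) * hv t ξ
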